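/- For every closed DLA term L, there exists a basic term L' such that the equation L = L' is derivable from the axioms of DLA (by equational logic). -/

import Mathlib

/-- Closed terms of Data Linkage Algebra (DLA), parameterized by the sets
`S` of spots, `F` of fields, `A` of atomic objects and `V` of values. -/
inductive DLATerm (S F A V : Type) : Type
  | empty : DLATerm S F A V
  | slink : S → A → DLATerm S F A V
  | pflink : A → F → DLATerm S F A V
  | flink : A → F → A → DLATerm S F A V
  | valass : A → V → DLATerm S F A V
  | plus : DLATerm S F A V → DLATerm S F A V → DLATerm S F A V
  | ovr : DLATerm S F A V → DLATerm S F A V → DLATerm S F A V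

namespace DLATerm

variable {S F A V : Type}

/-- The atomic constants of DLA: spot links, partial field links, field links
and value associations. -/
inductive IsAtomic : DLATerm S F A V → Prop
  | slink (s : S) (a : A) : IsAtomic (slink s a)
  | pflink (a : A) (f : F) : IsAtomic (pflink a f)
  | flink (a : A) (f : F) (b : A) : IsAtomic (flink a f b)
  | valass (a : A) (n : V) : IsAtomic (valass a n)

/-- Two atomic constants are clashing if they are two spot links via the same
spot, two (partial) field links from the same atomic object via the same
field, or two value associations with the same atomic object. -/
inductive Clashing : DLATerm S F A V → DLATerm S F A V → Prop
  | slink (s : S) (a b : A) : Clashing (slink s a) (slink s b)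
  | pf_pf (a : A) (f : F) : Clashing (pflink a f) (pflink a f)
  | pf_fl (a : A) (f : F) (b : A) : Clashing (pflink a f) (flink a f b)
  | fl_pf (a : A) (f : F) (b : A) : Clashing (flink a f b) (pflink a f)
  | fl_fl (a : A) (f : F) (b c : A) : Clashing (flink a f b) (flink a f c)
  | valass (a : A) (n m : V) : Clashing (valass a n) (valass a m)

/-- Derivability of an equation between closed DLA terms from the axioms of
DLA by equational logic. -/
inductive Derivable : DLATerm S F A V → DLATerm S F A V → Prop
  | refl (x) : Derivable x x
  | symm {x y} : Derivable x y → Derivable y x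
  | trans {x y z} : Derivable x y → Derivable y z → Derivable x z
  | plus_congr {x x' y y'} : Derivable x x' → Derivable y y' →
      Derivable (plus x y) (plus x' y')
  | ovr_congr {x x' y y'} : Derivable x x' → Derivable y y' →
      Derivable (ovr x y) (ovr x' y')
  -- X + Y = Y + X
  | plus_comm (x y) : Derivable (plus x y) (plus y x)
  -- X + (Y + Z) = (X + Y) + Z
  | plus_assoc (x y z) : Derivable (plus x (plus y z)) (plus (plus x y) z)
  -- X + X = X
  | plus_idem (x) : Derivable (plus x x) x
  -- X + ∅ = X
  | plus_empty (x) : Derivable (plus x empty) x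
  -- ∅ ⊕ X = X
  | empty_ovr (x) : Derivable (ovr empty x) x
  -- X ⊕ ∅ = X
  | ovr_empty (x) : Derivable (ovr x empty) x
  -- X ⊕ (Y + Z) = (X ⊕ Y) + (X ⊕ Z)
  | ovr_plus (x y z) : Derivable (ovr x (plus y z)) (plus (ovr x y) (ovr x z))
  -- (X + u) ⊕ v = X ⊕ v for clashing atomic constants u, v
  | clash (x : DLATerm S F A V) {u v : DLATerm S F A V} :
      IsAtomic u → IsAtomic v → Clashing u v →
      Derivable (ovr (plus x u) v) (ovr x v)
  -- (X + u) ⊕ v = (X ⊕ v) + u for non-clashing atomic constants u, v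
  | noclash (x : DLATerm S F A V) {u v : DLATerm S F A V} :
      IsAtomic u → IsAtomic v → ¬ Clashing u v →
      Derivable (ovr (plus x u) v) (plus (ovr x v) u)

/-- Basic terms: built from `empty` and the atomic constants using only `plus`. -/
inductive IsBasic : DLATerm S F A V → Prop
  | empty : IsBasic empty
  | atom {u : DLATerm S F A V} : IsAtomic u → IsBasic u
  | plus {x y : DLATerm S F A V} : IsBasic x → IsBasic y → IsBasic (plus x y)

end DLATerm

namespace DLATerm

variable {S F A V : Type}

/-- Left-nested sum of a list of terms. -/
def dsum : List (DLATerm S F A V) → DLATerm S F A V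
  | [] => .empty
  | u :: l => .plus (dsum l) u

lemma dsum_basic {l : List (DLATerm S F A V)} (h : ∀ u ∈ l, IsAtomic u) :
    IsBasic (dsum l) := by
  induction l with
  | nil => exact IsBasic.empty
  | cons u l ih =>
    exact IsBasic.plus (ih fun x hx => h x (List.mem_cons_of_mem _ hx))
      (IsBasic.atom (h u List.mem_cons_self))

lemma derivable_rotate (a u b : DLATerm S F A V) :
    Derivable (.plus (.plus a u) b) (.plus (.plus a b) u) :=
  ((Derivable.plus_assoc a u b).symm.trans
    (Derivable.plus_congr (Derivable.refl a) (Derivable.plus_comm u b))).trans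
    (Derivable.plus_assoc a b u)

lemma dsum_append (l1 l2 : List (DLATerm S F A V)) :
    Derivable (.plus (dsum l1) (dsum l2)) (dsum (l1 ++ l2)) := by
  induction l1 with
  | nil => exact (Derivable.plus_comm _ _).trans (Derivable.plus_empty _)
  | cons u l ih =>
    exact (derivable_rotate _ _ _).trans
      (Derivable.plus_congr ih (Derivable.refl u))

lemma basic_flat {x : DLATerm S F A V} (h : IsBasic x) :
    ∃ l : List (DLATerm S F A V), (∀ u ∈ l, IsAtomic u) ∧ Derivable x (dsum l) := by
  induction h with
  | empty => exact ⟨[], by simp, Derivable.refl _⟩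
  | atom hu =>
    refine ⟨[_], by simpa using hu, ?_⟩
    exact ((Derivable.plus_comm _ _).trans (Derivable.plus_empty _)).symm
  | plus _ _ ihx ihy =>
    obtain ⟨l1, h1, d1⟩ := ihx
    obtain ⟨l2, h2, d2⟩ := ihy
    refine ⟨l2 ++ l1, ?_, ?_⟩
    · intro u hu
      rcases List.mem_append.1 hu with h | h
      · exact h2 u h
      · exact h1 u h
    · exact ((Derivable.plus_congr d1 d2).trans (Derivable.plus_comm _ _)).trans
        (dsum_append l2 l1)

lemma ovr_atom (l : List (DLATerm S F A V)) (hl : ∀ u ∈ l, IsAtomic u)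
    {v : DLATerm S F A V} (hv : IsAtomic v) :
    ∃ w : DLATerm S F A V, IsBasic w ∧ Derivable (.ovr (dsum l) v) w := by
  induction l with
  | nil => exact ⟨v, IsBasic.atom hv, Derivable.empty_ovr v⟩
  | cons u l ih =>
    have hu : IsAtomic u := hl u List.mem_cons_self
    have hl' : ∀ x ∈ l, IsAtomic x := fun x hx => hl x (List.mem_cons_of_mem _ hx)
    obtain ⟨w, hw, dw⟩ := ih hl'
    rcases Classical.em (Clashing u v) with hc | hc
    · exact ⟨w, hw, (Derivable.clash (dsum l) hu hv hc).trans dw⟩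
    · exact ⟨.plus w u, IsBasic.plus hw (IsBasic.atom hu),
        (Derivable.noclash (dsum l) hu hv hc).trans
          (Derivable.plus_congr dw (Derivable.refl u))⟩

lemma ovr_basic {y : DLATerm S F A V} (hy : IsBasic y) :
    ∀ l : List (DLATerm S F A V), (∀ u ∈ l, IsAtomic u) →
      ∃ w : DLATerm S F A V, IsBasic w ∧ Derivable (.ovr (dsum l) y) w := by
  induction hy with
  | empty =>
    intro l hl
    exact ⟨dsum l, dsum_basic hl, Derivable.ovr_empty _⟩
  | atom hv =>
    intro l hl
    exact ovr_atom l hl hv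
  | plus _ _ ih1 ih2 =>
    intro l hl
    obtain ⟨w1, hw1, d1⟩ := ih1 l hl
    obtain ⟨w2, hw2, d2⟩ := ih2 l hl
    exact ⟨.plus w1 w2, IsBasic.plus hw1 hw2,
      (Derivable.ovr_plus _ _ _).trans (Derivable.plus_congr d1 d2)⟩

end DLATerm

/-- **Elimination theorem for DLA** (Theorem 1): for every closed DLA term `L`
there is a basic term `L'` such that `L = L'` is derivable from the axioms of
DLA. -/
theorem dla_elimination {S F A V : Type} [Fintype S] [Fintype F] [Fintype A] [Fintype V]
    (L : DLATerm S F A V) :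
    ∃ L' : DLATerm S F A V, L'.IsBasic ∧ DLATerm.Derivable L L' := by
  open DLATerm in
  induction L with
  | empty => exact ⟨.empty, IsBasic.empty, Derivable.refl _⟩
  | slink s a => exact ⟨_, IsBasic.atom (IsAtomic.slink s a), Derivable.refl _⟩
  | pflink a f => exact ⟨_, IsBasic.atom (IsAtomic.pflink a f), Derivable.refl _⟩
  | flink a f b => exact ⟨_, IsBasic.atom (IsAtomic.flink a f b), Derivable.refl _⟩
  | valass a n => exact ⟨_, IsBasic.atom (IsAtomic.valass a n), Derivable.refl _⟩
  | plus x y ihx ihy =>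
    obtain ⟨x', hx', dx⟩ := ihx
    obtain ⟨y', hy', dy⟩ := ihy
    exact ⟨.plus x' y', IsBasic.plus hx' hy', Derivable.plus_congr dx dy⟩
  | ovr x y ihx ihy =>
    obtain ⟨x', hx', dx⟩ := ihx
    obtain ⟨y', hy', dy⟩ := ihy
    obtain ⟨l, hl, dl⟩ := basic_flat hx'
    obtain ⟨w, hw, dw⟩ := ovr_basic hy' l hl
    exact ⟨w, hw, (Derivable.ovr_congr (dx.trans dl) dy).trans dw⟩
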